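/- Let a > 0, let ω₀ ∈ ℝ with ω₀ ≠ 0, and let ω̂, ω : (0,a) → ℝ be continuous with ω̂(r) − 1 = O(r²) and ω(r) − ω₀ = O(r²) as r → 0⁺. Then: (i) every differentiable, nowhere-vanishing function φ : (0,a) → ℝ satisfying r·φ'(r) + ω̂(r)·φ(r) = ω(r)·φ(r)² for all r ∈ (0,a) converges to 1/ω₀ as r → 0⁺; in particular, on some interval (0,δ) the sign of φ equals the sign of ω₀. (ii) There exist δ ∈ (0,a] and a differentiable, nowhere-vanishing solution φ : (0,δ) → ℝ of this equation. -/

import Mathlib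

open Set Filter intervalIntegral MeasureTheory Real Topology

lemma bern_aux (a ω₀ : ℝ) (ha : 0 < a) (ωhat ω : ℝ → ℝ)
    (hc1 : ContinuousOn ωhat (Ioo 0 a)) (hc2 : ContinuousOn ω (Ioo 0 a))
    (C₁ C₂ : ℝ) (hC₁ : 0 < C₁) (hC₂ : 0 < C₂)
    (hB1 : ∀ r : ℝ, 0 < r → r < a → |ωhat r - 1| ≤ C₁ * r ^ 2)
    (hB2 : ∀ r : ℝ, 0 < r → r < a → |ω r - ω₀| ≤ C₂ * r ^ 2) :
    ∃ ψ : ℝ → ℝ, (∀ r ∈ Ioo (0:ℝ) a, HasDerivAt ψ ((ωhat r * ψ r - ω r) / r) r) ∧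
      ∀ χ : ℝ → ℝ, (∀ r ∈ Ioo (0:ℝ) a, HasDerivAt χ ((ωhat r * χ r - ω r) / r) r) →
        Tendsto χ (𝓝[>] (0:ℝ)) (𝓝 ω₀) := by
  set r₀ : ℝ := a / 2 with hr₀def
  have hr₀ : r₀ ∈ Ioo (0:ℝ) a := ⟨by positivity, by simp [hr₀def]; linarith⟩
  have hsub : ∀ r ∈ Ioo (0:ℝ) a, uIcc r r₀ ⊆ Ioo (0:ℝ) a := by
    intro r hr
    rw [uIcc]
    exact Icc_subset_Ioo (lt_min hr.1 hr₀.1) (max_lt hr.2 hr₀.2)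
  -- integrand f = ωhat t / t
  have hfc : ContinuousOn (fun t : ℝ => ωhat t / t) (Ioo 0 a) :=
    hc1.div continuousOn_id (fun t ht => ne_of_gt ht.1)
  set G : ℝ → ℝ := fun r => ∫ t in r..r₀, ωhat t / t with hGdef
  set μ : ℝ → ℝ := fun r => Real.exp (G r) with hμdef
  have hμpos : ∀ r, 0 < μ r := fun r => Real.exp_pos _
  have hGd : ∀ r ∈ Ioo (0:ℝ) a, HasDerivAt G (-(ωhat r / r)) r := by
    intro r hr
    exact intervalIntegral.integral_hasDerivAt_left
      ((hfc.mono (hsub r hr)).intervalIntegrable)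
      (hfc.stronglyMeasurableAtFilter isOpen_Ioo r hr)
      (hfc.continuousAt (isOpen_Ioo.mem_nhds hr))
  have hμd : ∀ r ∈ Ioo (0:ℝ) a, HasDerivAt μ (μ r * (-(ωhat r / r))) r := by
    intro r hr
    exact (hGd r hr).exp
  have hμc : ContinuousOn μ (Ioo 0 a) :=
    fun r hr => ((hμd r hr).continuousAt).continuousWithinAt
  have hgc : ContinuousOn (fun t : ℝ => μ t * ω t / t) (Ioo 0 a) :=
    (hμc.mul hc2).div continuousOn_id (fun t ht => ne_of_gt ht.1)
  set I : ℝ → ℝ := fun r => ∫ t in r..r₀, μ t * ω t / t with hIdef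
  have hId : ∀ r ∈ Ioo (0:ℝ) a, HasDerivAt I (-(μ r * ω r / r)) r := by
    intro r hr
    exact intervalIntegral.integral_hasDerivAt_left
      ((hgc.mono (hsub r hr)).intervalIntegrable)
      (hgc.stronglyMeasurableAtFilter isOpen_Ioo r hr)
      (hgc.continuousAt (isOpen_Ioo.mem_nhds hr))
  set ψ : ℝ → ℝ := fun r => I r / μ r with hψdef
  have hψd : ∀ r ∈ Ioo (0:ℝ) a, HasDerivAt ψ ((ωhat r * ψ r - ω r) / r) r := by
    intro r hr
    have h : HasDerivAt ψ _ r := (hId r hr).div (hμd r hr) (ne_of_gt (hμpos r))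
    convert h using 1
    have hrne : r ≠ 0 := ne_of_gt hr.1
    have hμne : μ r ≠ 0 := ne_of_gt (hμpos r)
    field_simp [hψdef]
    rw [show ψ r = I r / μ r from rfl]; field_simp
    ring
  -- bound on G
  set B : ℝ := C₁ * a ^ 2 with hBdef
  have hB : 0 < B := by positivity
  have hGb : ∀ r ∈ Ioc (0:ℝ) r₀, |G r - Real.log (r₀ / r)| ≤ B := by
    intro r hr
    have hra : r ∈ Ioo (0:ℝ) a := ⟨hr.1, lt_of_le_of_lt hr.2 hr₀.2⟩
    have hrr₀ : r ≤ r₀ := hr.2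
    have hsub' : uIcc r r₀ ⊆ Ioo (0:ℝ) a := hsub r hra
    have h0 : (0:ℝ) ∉ uIcc r r₀ := fun h => lt_irrefl 0 (hsub' h).1
    have hint1 : IntervalIntegrable (fun t : ℝ => 1 / t) volume r r₀ :=
      ContinuousOn.intervalIntegrable
        (continuousOn_const.div continuousOn_id fun t ht => ne_of_gt (hsub' ht).1)
    have hint2 : IntervalIntegrable (fun t : ℝ => (ωhat t - 1) / t) volume r r₀ :=
      ContinuousOn.intervalIntegrable
        (((hc1.mono hsub').sub continuousOn_const).div continuousOn_id
          fun t ht => ne_of_gt (hsub' ht).1)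
    have hsplit : G r = Real.log (r₀ / r) + ∫ t in r..r₀, (ωhat t - 1) / t := by
      have hfe : (fun t : ℝ => ωhat t / t) = fun t => 1 / t + (ωhat t - 1) / t := by
        funext t
        rw [← add_div]
        ring_nf
      rw [hGdef]
      simp only [hfe]
      rw [intervalIntegral.integral_add hint1 hint2, integral_one_div h0]
    rw [hsplit]
    simp only [add_sub_cancel_left]
    calc |∫ t in r..r₀, (ωhat t - 1) / t|
        ≤ ∫ t in r..r₀, |(ωhat t - 1) / t| :=
          intervalIntegral.abs_integral_le_integral_abs hrr₀
      _ ≤ ∫ t in r..r₀, C₁ * t := by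
          apply intervalIntegral.integral_mono_on hrr₀ hint2.abs
            ((continuous_const.mul continuous_id).intervalIntegrable r r₀)
          intro t ht
          have ht' : t ∈ Ioo (0:ℝ) a := hsub' (by rw [uIcc_of_le hrr₀]; exact ht)
          rw [abs_div, abs_of_pos ht'.1, div_le_iff₀ ht'.1]
          calc |ωhat t - 1| ≤ C₁ * t ^ 2 := hB1 t ht'.1 ht'.2
            _ = C₁ * t * t := by ring
      _ = C₁ * ((r₀ ^ 2 - r ^ 2) / 2) := by
          rw [intervalIntegral.integral_const_mul, integral_id]
      _ ≤ B := by
          rw [hBdef]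
          have h1 : 0 < r := hr.1
          have h2 : r₀ ≤ a := le_of_lt hr₀.2
          have h3 : r₀ ^ 2 ≤ a ^ 2 := pow_le_pow_left₀ (le_of_lt hr₀.1) h2 2
          nlinarith [sq_nonneg r]
  -- μ bounds
  have hμub : ∀ r ∈ Ioc (0:ℝ) r₀, μ r ≤ r₀ / r * Real.exp B := by
    intro r hr
    have h1 := (abs_le.1 (hGb r hr)).2
    calc μ r = Real.exp (G r) := rfl
      _ ≤ Real.exp (Real.log (r₀ / r) + B) := Real.exp_le_exp.2 (by linarith)
      _ = r₀ / r * Real.exp B := by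
          rw [Real.exp_add, Real.exp_log (div_pos hr₀.1 hr.1)]
  have hμlb : ∀ r ∈ Ioc (0:ℝ) r₀, r₀ / r * Real.exp (-B) ≤ μ r := by
    intro r hr
    have h1 := (abs_le.1 (hGb r hr)).1
    calc r₀ / r * Real.exp (-B)
        = Real.exp (Real.log (r₀ / r) + -B) := by
          rw [Real.exp_add, Real.exp_log (div_pos hr₀.1 hr.1)]
      _ ≤ Real.exp (G r) := Real.exp_le_exp.2 (by linarith)
      _ = μ r := rfl
  -- key integral identity
  have hμder_cont : ContinuousOn (fun t : ℝ => μ t * (-(ωhat t / t))) (Ioo 0 a) :=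
    hμc.mul hfc.neg
  have hI2 : ∀ r ∈ Ioo (0:ℝ) a, (∫ t in r..r₀, ωhat t * μ t / t) = μ r - μ r₀ := by
    intro r hr
    have h := intervalIntegral.integral_eq_sub_of_hasDerivAt
      (f := μ) (f' := fun t => μ t * (-(ωhat t / t)))
      (fun t ht => hμd t (hsub r hr ht))
      ((hμder_cont.mono (hsub r hr)).intervalIntegrable)
    have he : (fun t : ℝ => ωhat t * μ t / t) = fun t => -(μ t * (-(ωhat t / t))) := by
      funext t; ring
    rw [he, intervalIntegral.integral_neg, h]
    ring
  -- constants
  set M' : ℝ := Real.exp B * (C₂ + |ω₀| * C₁) * a with hM'def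
  have hM'0 : 0 ≤ M' := by rw [hM'def]; positivity
  set N : ℝ := M' * a + |ω₀| * μ r₀ with hNdef
  have hN0 : 0 ≤ N := by
    rw [hNdef]
    exact add_nonneg (mul_nonneg hM'0 ha.le) (mul_nonneg (abs_nonneg _) (hμpos r₀).le)
  set K : ℝ := N * Real.exp B / r₀ with hKdef
  have hK0 : 0 ≤ K := by
    rw [hKdef]
    exact div_nonneg (mul_nonneg hN0 (Real.exp_pos _).le) hr₀.1.le
  have hhc : ContinuousOn (fun t : ℝ => ωhat t * μ t / t) (Ioo 0 a) :=
    (hc1.mul hμc).div continuousOn_id (fun t ht => ne_of_gt ht.1)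
  -- pointwise bound for ψ
  have hψb : ∀ r ∈ Ioc (0:ℝ) r₀, |ψ r - ω₀| ≤ K * r := by
    intro r hr
    have hra : r ∈ Ioo (0:ℝ) a := ⟨hr.1, lt_of_le_of_lt hr.2 hr₀.2⟩
    have hrr₀ : r ≤ r₀ := hr.2
    have hsub' : uIcc r r₀ ⊆ Ioo (0:ℝ) a := hsub r hra
    have hintA : IntervalIntegrable (fun t : ℝ => μ t * ω t / t) volume r r₀ :=
      (hgc.mono hsub').intervalIntegrable
    have hintB : IntervalIntegrable (fun t : ℝ => ω₀ * (ωhat t * μ t / t)) volume r r₀ :=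
      ((continuousOn_const.mul hhc).mono hsub').intervalIntegrable
    have key : I r - ω₀ * μ r =
        (∫ t in r..r₀, (μ t * ω t / t - ω₀ * (ωhat t * μ t / t))) - ω₀ * μ r₀ := by
      rw [intervalIntegral.integral_sub hintA hintB,
        intervalIntegral.integral_const_mul, hI2 r hra]
      have hIr : (∫ t in r..r₀, μ t * ω t / t) = I r := rfl
      rw [hIr]; ring
    have hIb : |∫ t in r..r₀, (μ t * ω t / t - ω₀ * (ωhat t * μ t / t))| ≤ M' * a := by
      have hpt : ∀ x ∈ Set.uIoc r r₀,
          ‖μ x * ω x / x - ω₀ * (ωhat x * μ x / x)‖ ≤ M' := by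
        intro x hx
        rw [Set.uIoc_of_le hrr₀] at hx
        have hx0 : x ∈ Ioc (0:ℝ) r₀ := ⟨lt_trans hr.1 hx.1, hx.2⟩
        have hxa : x ∈ Ioo (0:ℝ) a := ⟨hx0.1, lt_of_le_of_lt hx0.2 hr₀.2⟩
        have hX : |ω x - ω₀ * ωhat x| ≤ (C₂ + |ω₀| * C₁) * x ^ 2 := by
          have h1 : ω x - ω₀ * ωhat x = (ω x - ω₀) - ω₀ * (ωhat x - 1) := by ring
          rw [h1]
          calc |(ω x - ω₀) - ω₀ * (ωhat x - 1)|
              ≤ |ω x - ω₀| + |ω₀ * (ωhat x - 1)| := abs_sub _ _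
            _ ≤ C₂ * x ^ 2 + |ω₀| * (C₁ * x ^ 2) := by
                rw [abs_mul]
                exact add_le_add (hB2 x hxa.1 hxa.2)
                  (mul_le_mul_of_nonneg_left (hB1 x hxa.1 hxa.2) (abs_nonneg _))
            _ = (C₂ + |ω₀| * C₁) * x ^ 2 := by ring
        have hμxx : μ x * x ≤ r₀ * Real.exp B := by
          have := hμub x hx0
          rw [div_mul_eq_mul_div, le_div_iff₀ hx0.1] at this
          linarith
        have he : μ x * ω x / x - ω₀ * (ωhat x * μ x / x) = μ x * (ω x - ω₀ * ωhat x) / x := by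
          ring
        rw [he, Real.norm_eq_abs, abs_div, abs_of_pos hxa.1, abs_mul,
          abs_of_pos (hμpos x), div_le_iff₀ hxa.1]
        calc μ x * |ω x - ω₀ * ωhat x|
            ≤ μ x * ((C₂ + |ω₀| * C₁) * x ^ 2) :=
              mul_le_mul_of_nonneg_left hX (hμpos x).le
          _ = (μ x * x) * ((C₂ + |ω₀| * C₁) * x) := by ring
          _ ≤ (r₀ * Real.exp B) * ((C₂ + |ω₀| * C₁) * x) := by
              apply mul_le_mul_of_nonneg_right hμxx
              exact mul_nonneg (by positivity) hxa.1.le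
          _ ≤ (a * Real.exp B) * ((C₂ + |ω₀| * C₁) * x) := by
              apply mul_le_mul_of_nonneg_right _ (mul_nonneg (by positivity) hxa.1.le)
              exact mul_le_mul_of_nonneg_right hr₀.2.le (Real.exp_pos _).le
          _ = M' * x := by rw [hM'def]; ring
      have h := intervalIntegral.norm_integral_le_of_norm_le_const hpt
      rw [Real.norm_eq_abs] at h
      calc |∫ t in r..r₀, (μ t * ω t / t - ω₀ * (ωhat t * μ t / t))|
          ≤ M' * |r₀ - r| := h
        _ ≤ M' * a := by
            apply mul_le_mul_of_nonneg_left _ hM'0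
            rw [abs_of_nonneg (by linarith)]
            have := hr₀.2; have := hr.1; linarith
    have hnum : |I r - ω₀ * μ r| ≤ N := by
      rw [key, hNdef]
      calc |(∫ t in r..r₀, (μ t * ω t / t - ω₀ * (ωhat t * μ t / t))) - ω₀ * μ r₀|
          ≤ |∫ t in r..r₀, (μ t * ω t / t - ω₀ * (ωhat t * μ t / t))| + |ω₀ * μ r₀| :=
            abs_sub _ _
        _ ≤ M' * a + |ω₀| * μ r₀ := by
            rw [abs_mul, abs_of_pos (hμpos r₀)]
            exact add_le_add hIb le_rfl
    have hμne : μ r ≠ 0 := ne_of_gt (hμpos r)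
    have hψr : ψ r - ω₀ = (I r - ω₀ * μ r) / μ r := by
      rw [hψdef]; field_simp
    rw [hψr, abs_div, abs_of_pos (hμpos r), div_le_iff₀ (hμpos r)]
    have hrne : r ≠ 0 := ne_of_gt hr.1
    have heB : Real.exp B ≠ 0 := Real.exp_ne_zero B
    have h4 : K * r * (r₀ / r * Real.exp (-B)) = N := by
      rw [hKdef, Real.exp_neg]
      have hr₀ne : r₀ ≠ 0 := hr₀.1.ne'
      field_simp
    calc |I r - ω₀ * μ r| ≤ N := hnum
      _ = K * r * (r₀ / r * Real.exp (-B)) := h4.symm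
      _ ≤ K * r * μ r := by
          apply mul_le_mul_of_nonneg_left (hμlb r hr)
          exact mul_nonneg hK0 hr.1.le
  -- tendsto of ψ
  have hψt : Tendsto ψ (𝓝[>] (0:ℝ)) (𝓝 ω₀) := by
    have h1 : Tendsto (fun r : ℝ => ψ r - ω₀) (𝓝[>] (0:ℝ)) (𝓝 0) := by
      apply squeeze_zero_norm' (a := fun r : ℝ => K * r)
      · filter_upwards [Ioc_mem_nhdsGT_of_mem (left_mem_Ico.2 hr₀.1)] with r hr
        rw [Real.norm_eq_abs]
        exact hψb r hr
      · have h2 : Tendsto (fun r : ℝ => K * r) (𝓝 (0:ℝ)) (𝓝 (K * 0)) :=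
          (continuous_const.mul continuous_id).tendsto 0
        simpa using h2.mono_left nhdsWithin_le_nhds
    have := h1.add (tendsto_const_nhds (x := ω₀) (f := 𝓝[>] (0:ℝ)))
    simpa using this
  refine ⟨ψ, hψd, ?_⟩
  intro χ hχd
  set F : ℝ → ℝ := fun r => μ r * (χ r - ψ r) with hFdef
  have hFd : ∀ r ∈ Ioo (0:ℝ) a, HasDerivAt F 0 r := by
    intro r hr
    have h := (hμd r hr).mul ((hχd r hr).sub (hψd r hr))
    have he : μ r * -(ωhat r / r) * (χ r - ψ r) +
        μ r * ((ωhat r * χ r - ω r) / r - (ωhat r * ψ r - ω r) / r) = 0 := by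
      have hrne : r ≠ 0 := ne_of_gt hr.1
      field_simp
      ring
    rw [Pi.sub_apply, he] at h
    exact h
  have hFconst : ∀ r ∈ Ioo (0:ℝ) a, F r = F r₀ := by
    intro r hr
    have h := intervalIntegral.integral_eq_sub_of_hasDerivAt
      (f := F) (f' := fun _ => (0:ℝ))
      (fun t ht => hFd t (hsub r hr ht)) intervalIntegrable_const
    simp only [intervalIntegral.integral_zero] at h
    linarith [h]
  set K' : ℝ := |F r₀| * Real.exp B / r₀ with hK'def
  have hK'0 : 0 ≤ K' := by
    rw [hK'def]
    exact div_nonneg (mul_nonneg (abs_nonneg _) (Real.exp_pos _).le) hr₀.1.le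
  have hdb : ∀ r ∈ Ioc (0:ℝ) r₀, |χ r - ψ r| ≤ K' * r := by
    intro r hr
    have hra : r ∈ Ioo (0:ℝ) a := ⟨hr.1, lt_of_le_of_lt hr.2 hr₀.2⟩
    have hμne : μ r ≠ 0 := ne_of_gt (hμpos r)
    have hd : χ r - ψ r = F r₀ / μ r := by
      rw [← hFconst r hra, hFdef]
      field_simp
    rw [hd, abs_div, abs_of_pos (hμpos r), div_le_iff₀ (hμpos r)]
    have hrne : r ≠ 0 := ne_of_gt hr.1
    have heB : Real.exp B ≠ 0 := Real.exp_ne_zero B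
    have h4 : K' * r * (r₀ / r * Real.exp (-B)) = |F r₀| := by
      rw [hK'def, Real.exp_neg]
      have hr₀ne : r₀ ≠ 0 := hr₀.1.ne'
      field_simp
    calc |F r₀| = K' * r * (r₀ / r * Real.exp (-B)) := h4.symm
      _ ≤ K' * r * μ r := by
          apply mul_le_mul_of_nonneg_left (hμlb r hr)
          exact mul_nonneg hK'0 hr.1.le
  have h1 : Tendsto (fun r : ℝ => χ r - ψ r) (𝓝[>] (0:ℝ)) (𝓝 0) := by
    apply squeeze_zero_norm' (a := fun r : ℝ => K' * r)
    · filter_upwards [Ioc_mem_nhdsGT_of_mem (left_mem_Ico.2 hr₀.1)] with r hr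
      rw [Real.norm_eq_abs]
      exact hdb r hr
    · have h2 : Tendsto (fun r : ℝ => K' * r) (𝓝 (0:ℝ)) (𝓝 (K' * 0)) :=
        (continuous_const.mul continuous_id).tendsto 0
      simpa using h2.mono_left nhdsWithin_le_nhds
  have := h1.add hψt
  simpa using this



/-- The singular Bernoulli-type ODE `r φ' + ω̂ φ = ω φ²` with `ω̂ = 1 + O(r²)`,
`ω = ω₀ + O(r²)`, `ω₀ ≠ 0`:
(i) every differentiable nowhere-vanishing solution on `(0,a)` tends to `1/ω₀` at `0⁺`
and has the sign of `ω₀` near `0⁺`;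
(ii) a differentiable nowhere-vanishing solution exists on some `(0,δ)`. -/
theorem bernoulli_fuchsian (a ω₀ : ℝ) (ha : 0 < a) (hω₀ : ω₀ ≠ 0)
    (ωhat ω : ℝ → ℝ)
    (hc1 : ContinuousOn ωhat (Set.Ioo (0 : ℝ) a))
    (hc2 : ContinuousOn ω (Set.Ioo (0 : ℝ) a))
    (hO1 : ∃ C δ : ℝ, 0 < C ∧ 0 < δ ∧
      ∀ r : ℝ, 0 < r → r < δ → |ωhat r - 1| ≤ C * r ^ 2)
    (hO2 : ∃ C δ : ℝ, 0 < C ∧ 0 < δ ∧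
      ∀ r : ℝ, 0 < r → r < δ → |ω r - ω₀| ≤ C * r ^ 2) :
    (∀ φ : ℝ → ℝ,
      (∀ r ∈ Set.Ioo (0 : ℝ) a, DifferentiableAt ℝ φ r) →
      (∀ r ∈ Set.Ioo (0 : ℝ) a, φ r ≠ 0) →
      (∀ r ∈ Set.Ioo (0 : ℝ) a, r * deriv φ r + ωhat r * φ r = ω r * φ r ^ 2) →
      Filter.Tendsto φ (nhdsWithin (0 : ℝ) (Set.Ioi 0)) (nhds (1 / ω₀)) ∧
      ∃ δ : ℝ, 0 < δ ∧ δ ≤ a ∧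
        ∀ r : ℝ, 0 < r → r < δ → Real.sign (φ r) = Real.sign ω₀) ∧
    (∃ δ : ℝ, 0 < δ ∧ δ ≤ a ∧ ∃ φ : ℝ → ℝ,
      ∀ r ∈ Set.Ioo (0 : ℝ) δ, DifferentiableAt ℝ φ r ∧ φ r ≠ 0 ∧
        r * deriv φ r + ωhat r * φ r = ω r * φ r ^ 2) := by
  obtain ⟨C₁, δ₁, hC₁, hδ₁, h1⟩ := hO1
  obtain ⟨C₂, δ₂, hC₂, hδ₂, h2⟩ := hO2
  set b : ℝ := min a (min δ₁ δ₂) / 2 with hbdef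
  have hb0 : 0 < b := by rw [hbdef]; positivity
  have hba : b < a := by
    rw [hbdef]
    have : min a (min δ₁ δ₂) ≤ a := min_le_left _ _
    linarith
  have hbδ₁ : b < δ₁ := by
    rw [hbdef]
    have h := le_trans (min_le_right a _) (min_le_left δ₁ δ₂)
    linarith
  have hbδ₂ : b < δ₂ := by
    rw [hbdef]
    have h := le_trans (min_le_right a _) (min_le_right δ₁ δ₂)
    linarith
  have hsub : Set.Ioo (0:ℝ) b ⊆ Set.Ioo (0:ℝ) a :=
    Set.Ioo_subset_Ioo le_rfl hba.le
  obtain ⟨ψ, hψd, huniq⟩ := bern_aux b ω₀ hb0 ωhat ω (hc1.mono hsub) (hc2.mono hsub)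
    C₁ C₂ hC₁ hC₂
    (fun r hr hrb => h1 r hr (lt_trans hrb hbδ₁))
    (fun r hr hrb => h2 r hr (lt_trans hrb hbδ₂))
  constructor
  · -- part (i)
    intro φ hdiff hne hode
    have hχd : ∀ r ∈ Set.Ioo (0:ℝ) b,
        HasDerivAt (fun r => (φ r)⁻¹) ((ωhat r * (φ r)⁻¹ - ω r) / r) r := by
      intro r hr
      have hra : r ∈ Set.Ioo (0:ℝ) a := hsub hr
      have hφd : HasDerivAt φ (deriv φ r) r := (hdiff r hra).hasDerivAt
      have h : HasDerivAt (fun r => (φ r)⁻¹) _ r := hφd.inv (hne r hra)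
      convert h using 1
      have hode' := hode r hra
      have hrne : r ≠ 0 := ne_of_gt hr.1
      have hφne : φ r ≠ 0 := hne r hra
      field_simp
      linear_combination hode'
    have hχt := huniq _ hχd
    have hφt : Filter.Tendsto φ (nhdsWithin (0:ℝ) (Set.Ioi 0)) (nhds (1 / ω₀)) := by
      have h := hχt.inv₀ hω₀
      rw [one_div]
      apply h.congr'
      filter_upwards [Ioo_mem_nhdsGT_of_mem (Set.left_mem_Ico.2 hb0)] with r hr
      rw [inv_inv]
    refine ⟨hφt, ?_⟩
    have hpos : 0 < |1 / ω₀| := abs_pos.2 (one_div_ne_zero hω₀)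
    have hev : ∀ᶠ r in nhdsWithin (0:ℝ) (Set.Ioi 0), |φ r - 1 / ω₀| < |1 / ω₀| := by
      have h := Metric.tendsto_nhds.1 hφt _ hpos
      filter_upwards [h] with r hr
      rwa [Real.dist_eq] at hr
    obtain ⟨u, hu, hsubu⟩ := mem_nhdsGT_iff_exists_Ioo_subset.1 hev
    refine ⟨min u a, lt_min hu ha, min_le_right _ _, ?_⟩
    intro r hr0 hrδ
    have hd : |φ r - 1 / ω₀| < |1 / ω₀| :=
      hsubu ⟨hr0, lt_of_lt_of_le hrδ (min_le_left _ _)⟩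
    rcases lt_or_gt_of_ne hω₀ with hneg | hpos'
    · have h1ω : 1 / ω₀ < 0 := by
        apply div_neg_of_pos_of_neg one_pos hneg
      rw [abs_of_neg h1ω] at hd
      have hφneg : φ r < 0 := by
        have := (abs_lt.1 hd).2
        linarith
      rw [Real.sign_of_neg hφneg, Real.sign_of_neg hneg]
    · have h1ω : 0 < 1 / ω₀ := by positivity
      rw [abs_of_pos h1ω] at hd
      have hφpos : 0 < φ r := by
        have := (abs_lt.1 hd).1
        linarith
      rw [Real.sign_of_pos hφpos, Real.sign_of_pos hpos']
  · -- part (ii)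
    have hψt := huniq ψ hψd
    have hev : ∀ᶠ r in nhdsWithin (0:ℝ) (Set.Ioi 0), |ψ r - ω₀| < |ω₀| := by
      have h := Metric.tendsto_nhds.1 hψt _ (abs_pos.2 hω₀)
      filter_upwards [h] with r hr
      rwa [Real.dist_eq] at hr
    obtain ⟨u, hu, hsubu⟩ := mem_nhdsGT_iff_exists_Ioo_subset.1 hev
    refine ⟨min u b, lt_min hu hb0, le_trans (min_le_right _ _) hba.le,
      fun r => (ψ r)⁻¹, ?_⟩
    intro r hr
    have hru : r ∈ Set.Ioo (0:ℝ) u := ⟨hr.1, lt_of_lt_of_le hr.2 (min_le_left _ _)⟩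
    have hrb : r ∈ Set.Ioo (0:ℝ) b := ⟨hr.1, lt_of_lt_of_le hr.2 (min_le_right _ _)⟩
    have hd : |ψ r - ω₀| < |ω₀| := hsubu hru
    have hψne : ψ r ≠ 0 := by
      intro h0
      rw [h0] at hd
      simp at hd
    have hinv : HasDerivAt (fun r => (ψ r)⁻¹) (-((ωhat r * ψ r - ω r) / r) / ψ r ^ 2) r :=
      (hψd r hrb).inv hψne
    refine ⟨hinv.differentiableAt, inv_ne_zero hψne, ?_⟩
    rw [hinv.deriv]
    have hrne : r ≠ 0 := ne_of_gt hr.1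
    field_simp
    ring
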